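/- The function ε ↦ 𝓕₂⁽¹⁾(a, b₁, 1/ε; c₁, c₂; t₁, t₂, k₁, k₂, x, ε·y), defined for ε ∈ ℂ∖{0}, tends to the discrete Humbert function ψ₁⁽¹⁾(a, b₁; c₁, c₂; t₁, t₂, k₁, k₂, x, y) as ε → 0 along ℂ∖{0}. -/

import Mathlib

open Complex Finset

/-- Ascending Pochhammer symbol `(z)_j = z (z+1) ⋯ (z+j−1)`, with `(z)_0 = 1`. -/
noncomputable def poch (z : ℂ) (j : ℕ) : ℂ := (ascPochhammer ℂ j).eval z

lemma poch_eq_prod (z : ℂ) (n : ℕ) : poch z n = ∏ i ∈ Finset.range n, (z + i) := by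
  induction n with
  | zero => simp [poch]
  | succ n ih => rw [poch, ascPochhammer_succ_eval, ← poch, ih, Finset.prod_range_succ]

lemma key_tendsto (n : ℕ) (y : ℂ) :
    Filter.Tendsto (fun ε : ℂ => poch (1/ε) n * (ε*y)^n) (nhdsWithin 0 {(0:ℂ)}ᶜ) (nhds (y^n)) := by
  have h : (fun ε : ℂ => poch (1/ε) n * (ε*y)^n)
      =ᶠ[nhdsWithin 0 {(0:ℂ)}ᶜ] fun ε => (∏ i ∈ Finset.range n, (1 + ε*i)) * y^n := by
    filter_upwards [self_mem_nhdsWithin] with ε hε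
    have hε' : ε ≠ 0 := hε
    rw [poch_eq_prod, mul_pow, ← mul_assoc, mul_comm ((∏ i ∈ Finset.range n, (1/ε + i))) (ε^n)]
    congr 1
    calc ε ^ n * ∏ i ∈ Finset.range n, (1/ε + (i:ℂ))
        = ∏ i ∈ Finset.range n, ε * (1/ε + (i:ℂ)) := by
          rw [Finset.prod_mul_distrib, Finset.prod_const, Finset.card_range]
      _ = ∏ i ∈ Finset.range n, (1 + ε * (i:ℂ)) := by
          refine Finset.prod_congr rfl fun i _ => ?_
          field_simp
  refine Filter.Tendsto.congr' h.symm ?_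
  have : Filter.Tendsto (fun ε : ℂ => (∏ i ∈ Finset.range n, (1 + ε*i)) * y^n) (nhds 0) (nhds (y^n)) := by
    have hc : Continuous (fun ε : ℂ => (∏ i ∈ Finset.range n, (1 + ε*i)) * y^n) := by
      continuity
    have := hc.tendsto 0
    simpa using this
  exact this.mono_left nhdsWithin_le_nhds

/-- The first discrete Appell function `𝓕₂⁽¹⁾(a,b₁,b₂;c₁,c₂;t₁,t₂,k₁,k₂,x,y)`.
Since `(−t₁)_{m k₁} = 0` once `m k₁ > t₁` and `(−t₂)_{n k₂} = 0` once `n k₂ > t₂`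
(for `k₁, k₂ ≥ 1`), the doubly infinite sum reduces to this finite sum. -/
noncomputable def F2one (a b₁ b₂ c₁ c₂ : ℂ) (t₁ t₂ k₁ k₂ : ℕ) (x y : ℂ) : ℂ :=
  ∑ m ∈ Finset.range (t₁ + 1), ∑ n ∈ Finset.range (t₂ + 1),
    poch a (m + n) * poch b₁ m * poch b₂ n * (-1 : ℂ) ^ (m * k₁) * poch (-(t₁ : ℂ)) (m * k₁)
      * (-1 : ℂ) ^ (n * k₂) * poch (-(t₂ : ℂ)) (n * k₂) * x ^ m * y ^ n
    / (poch c₁ m * poch c₂ n * (Nat.factorial m : ℂ) * (Nat.factorial n : ℂ))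

open Filter Topology

/-- The first discrete Humbert function `ψ₁⁽¹⁾(a,b₁;c₁,c₂;t₁,t₂,k₁,k₂,x,y)`, a finite sum. -/
noncomputable def psi1one (a b₁ c₁ c₂ : ℂ) (t₁ t₂ k₁ k₂ : ℕ) (x y : ℂ) : ℂ :=
  ∑ m ∈ Finset.range (t₁ + 1), ∑ n ∈ Finset.range (t₂ + 1),
    poch a (m + n) * poch b₁ m * (-1 : ℂ) ^ (m * k₁) * poch (-(t₁ : ℂ)) (m * k₁)
      * (-1 : ℂ) ^ (n * k₂) * poch (-(t₂ : ℂ)) (n * k₂) * x ^ m * y ^ n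
    / (poch c₁ m * poch c₂ n * (Nat.factorial m : ℂ) * (Nat.factorial n : ℂ))

/-- `𝓕₂⁽¹⁾(a, b₁, 1/ε; c₁, c₂; t₁, t₂, k₁, k₂, x, ε y) → ψ₁⁽¹⁾(a, b₁; c₁, c₂; t₁, t₂, k₁, k₂, x, y)`
as `ε → 0` along `ℂ ∖ {0}`. -/
theorem F2one_tendsto_psi1one (a b₁ c₁ c₂ x y : ℂ) (k₁ k₂ : ℕ)
    (hk₁ : 0 < k₁) (hk₂ : 0 < k₂)
    (hc₁ : ∀ n : ℕ, c₁ ≠ -(n : ℂ)) (hc₂ : ∀ n : ℕ, c₂ ≠ -(n : ℂ))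
    (t₁ t₂ : ℕ) :
    Tendsto (fun ε : ℂ => F2one a b₁ (1 / ε) c₁ c₂ t₁ t₂ k₁ k₂ x (ε * y))
      (𝓝[≠] (0 : ℂ)) (𝓝 (psi1one a b₁ c₁ c₂ t₁ t₂ k₁ k₂ x y)) := by
  unfold F2one psi1one
  refine tendsto_finset_sum _ fun m _ => tendsto_finset_sum _ fun n _ => ?_
  set C : ℂ := poch a (m + n) * poch b₁ m * (-1 : ℂ) ^ (m * k₁) * poch (-(t₁ : ℂ)) (m * k₁)
      * (-1 : ℂ) ^ (n * k₂) * poch (-(t₂ : ℂ)) (n * k₂) * x ^ m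
    / (poch c₁ m * poch c₂ n * (Nat.factorial m : ℂ) * (Nat.factorial n : ℂ)) with hC
  have h := (key_tendsto n y).const_mul C
  have e1 : poch a (m + n) * poch b₁ m * (-1 : ℂ) ^ (m * k₁) * poch (-(t₁ : ℂ)) (m * k₁)
      * (-1 : ℂ) ^ (n * k₂) * poch (-(t₂ : ℂ)) (n * k₂) * x ^ m * y ^ n
    / (poch c₁ m * poch c₂ n * (Nat.factorial m : ℂ) * (Nat.factorial n : ℂ)) = C * y ^ n := by
    rw [hC]; ring
  rw [e1]
  exact h.congr fun ε => by rw [hC]; ring
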